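/- Let G be a finite connected 2-γ'MB-critical graph with a cut-vertex x such that every edge of G incident with x is a bridge of G. Then G is isomorphic to F_{m₁,1,m₂} for some integers 2 ≤ m₁ ≤ m₂. -/

import Mathlib

/-- `D` is a dominating set of `G`: every vertex not in `D` has a neighbor in `D`. -/
def Dominating {V : Type*} (G : SimpleGraph V) (D : Set V) : Prop :=
  ∀ v, v ∉ D → ∃ d ∈ D, G.Adj d v

/-- Dominator wins the S-game on `G` within one move. -/
def WinsWithin1 {V : Type*} (G : SimpleGraph V) : Prop :=
  ∀ s₁ : V, ∃ d₁, d₁ ≠ s₁ ∧ Dominating G {d₁}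

/-- Dominator wins the S-game on `G` within two moves. -/
def WinsWithin2 {V : Type*} (G : SimpleGraph V) : Prop :=
  ∀ s₁ : V, ∃ d₁, d₁ ≠ s₁ ∧
    (Dominating G {d₁} ∨
      ∀ s₂, s₂ ∉ ({s₁, d₁} : Set V) →
        ∃ d₂, d₂ ∉ ({s₁, d₁, s₂} : Set V) ∧ Dominating G {d₁, d₂})

/-- `γ'MB(G) = 2`: Dominator wins the S-game within two moves but not within one. -/
def MBPrimeEqTwo {V : Type*} (G : SimpleGraph V) : Prop :=
  WinsWithin2 G ∧ ¬ WinsWithin1 G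

/-- `G` is `2`-`γ'MB`-critical: `γ'MB(G) = 2` and for every edge `e`, Dominator does not
win the S-game on `G - e` within two moves. -/
def Critical2 {V : Type*} (G : SimpleGraph V) : Prop :=
  MBPrimeEqTwo G ∧ ∀ u v : V, G.Adj u v → ¬ WinsWithin2 (G.deleteEdges {s(u, v)})

/-- The graph `H_m`, the join of `K₂` with the complement of `K_{m-2}`: the first two
vertices are adjacent to everything, the remaining vertices form an independent set.
(`H₀` is the null graph, `H₂ = K₂`.) -/
def HGraph (m : ℕ) : SimpleGraph (Fin m) :=
  SimpleGraph.fromRel (fun u _ => u.val < 2)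

/-- Vertex type of `F_{m₁,t,m₂}`: a copy of `H_{m₁}`, a copy of `H_{m₂}`, the independent
set `B` of `t` vertices, and the two vertices `v₁ = inr (inr 0)` and `v₂ = inr (inr 1)`. -/
abbrev FVert (m₁ t m₂ : ℕ) : Type := (Fin m₁ ⊕ Fin m₂) ⊕ (Fin t ⊕ Fin 2)

/-- The graph `F_{m₁,t,m₂}`: disjoint copies of `H_{m₁}` and `H_{m₂}`, an independent set
`B` of `t` vertices, and nonadjacent vertices `v₁, v₂`, where `v₁` is joined to `H_{m₁}`,
`v₂` is joined to `H_{m₂}`, and both `v₁` and `v₂` are joined to all of `B`. -/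
def FGraph (m₁ t m₂ : ℕ) : SimpleGraph (FVert m₁ t m₂) :=
  SimpleGraph.fromRel (fun u v =>
    match u, v with
    | .inl (.inl a), .inl (.inl _) => a.val < 2   -- inside H_{m₁}
    | .inl (.inr a), .inl (.inr _) => a.val < 2   -- inside H_{m₂}
    | .inr (.inr i), .inl (.inl _) => i = 0       -- v₁ to H_{m₁}
    | .inr (.inr i), .inl (.inr _) => i = 1       -- v₂ to H_{m₂}
    | .inr (.inr _), .inr (.inl _) => True        -- v₁, v₂ to B
    | _, _ => False)



namespace MB7

variable {V : Type*}

lemma pick2 (a b s : V) (hab : a ≠ b) : ∃ d, (d = a ∨ d = b) ∧ d ≠ s := by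
  by_cases h : a = s
  · exact ⟨b, Or.inr rfl, fun hb => hab (h.trans hb.symm)⟩
  · exact ⟨a, Or.inl rfl, h⟩

lemma pick3 (a b c s t : V) (hab : a ≠ b) (hac : a ≠ c) (hbc : b ≠ c) :
    ∃ d, (d = a ∨ d = b ∨ d = c) ∧ d ≠ s ∧ d ≠ t := by
  by_cases ha : a = s
  · subst ha
    by_cases hb : b = t
    · subst hb
      exact ⟨c, Or.inr (Or.inr rfl), hac.symm, hbc.symm⟩
    · exact ⟨b, Or.inr (Or.inl rfl), hab.symm, hb⟩
  · by_cases ha' : a = t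
    · subst ha'
      by_cases hb : b = s
      · subst hb
        exact ⟨c, Or.inr (Or.inr rfl), hbc.symm, hac.symm⟩
      · exact ⟨b, Or.inr (Or.inl rfl), hb, hab.symm⟩
    · exact ⟨a, Or.inl rfl, ha, ha'⟩

variable (G : SimpleGraph V) (x : V)

/-- reachability avoiding `x` -/
def RA (a b : V) : Prop := ∃ w : G.Walk a b, x ∉ w.support

variable {G x}

lemma RA.ne_left {a b : V} (h : RA G x a b) : a ≠ x := by
  obtain ⟨w, hw⟩ := h
  intro h'; exact hw (h' ▸ w.start_mem_support)

lemma RA.ne_right {a b : V} (h : RA G x a b) : b ≠ x := by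
  obtain ⟨w, hw⟩ := h
  intro h'; exact hw (h' ▸ w.end_mem_support)

lemma ra_refl {a : V} (ha : a ≠ x) : RA G x a a :=
  ⟨SimpleGraph.Walk.nil, by simp [ha.symm]⟩

lemma RA.symm {a b : V} (h : RA G x a b) : RA G x b a := by
  obtain ⟨w, hw⟩ := h
  exact ⟨w.reverse, by simpa [SimpleGraph.Walk.support_reverse] using hw⟩

lemma RA.trans {a b c : V} (h : RA G x a b) (h' : RA G x b c) : RA G x a c := by
  obtain ⟨w, hw⟩ := h
  obtain ⟨w', hw'⟩ := h'
  refine ⟨w.append w', ?_⟩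
  rw [SimpleGraph.Walk.support_append]
  intro hmem
  rcases List.mem_append.1 hmem with h1 | h2
  · exact hw h1
  · exact hw' (List.mem_of_mem_tail h2)

lemma ra_adj {a b : V} (h : G.Adj a b) (ha : a ≠ x) (hb : b ≠ x) : RA G x a b :=
  ⟨SimpleGraph.Walk.cons h SimpleGraph.Walk.nil, by
    simp [SimpleGraph.Walk.support_cons, ha.symm, hb.symm]⟩

/-- Every vertex `y ≠ x` reaches some neighbor of `x` while avoiding `x`. -/
lemma reach_nbr_aux {y c : V} (w : G.Walk y c) : c = x → y ≠ x →
    ∃ u, G.Adj x u ∧ RA G x y u := by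
  induction w with
  | nil => exact fun hc hy => absurd hc hy
  | @cons a z c h p ih =>
    intro hc hy
    by_cases hz : z = x
    · subst hz
      exact ⟨a, h.symm, ra_refl hy⟩
    · obtain ⟨u, hu, hra⟩ := ih hc hz
      exact ⟨u, hu, (ra_adj h hy hz).trans hra⟩

lemma reach_nbr {y : V} (w : G.Walk y x) (hy : y ≠ x) :
    ∃ u, G.Adj x u ∧ RA G x y u := reach_nbr_aux w rfl hy

/-- two distinct neighbours of `x` across bridges are not connected avoiding `x`. -/
lemma bridge_sep (hbridge : ∀ y : V, G.Adj x y → G.IsBridge s(x, y))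
    {u u' : V} (hu : G.Adj x u) (hu' : G.Adj x u') (hne : u ≠ u') (h : RA G x u' u) : False := by
  obtain ⟨w, hw⟩ := h
  have hb := (SimpleGraph.isBridge_iff.1 (hbridge u hu))
  apply hb
  refine SimpleGraph.reachable_delete_edges_iff_exists_walk.2 ⟨SimpleGraph.Walk.cons hu' w, ?_⟩
  intro hmem
  rw [SimpleGraph.Walk.edges_cons] at hmem
  rcases List.mem_cons.1 hmem with h1 | h2
  · rw [Sym2.eq_iff] at h1
    rcases h1 with ⟨-, h⟩ | ⟨h, -⟩
    · exact hne h
    · exact hu'.ne h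
  · exact hw (SimpleGraph.Walk.fst_mem_support_of_mem_edges w h2)

lemma ra_induce {a b : V} (w : G.Walk a b) (hw : x ∉ w.support)
    (ha : a ∈ ({x}ᶜ : Set V)) (hb : b ∈ ({x}ᶜ : Set V)) :
    (G.induce ({x}ᶜ : Set V)).Reachable ⟨a, ha⟩ ⟨b, hb⟩ := by
  induction w with
  | nil => exact SimpleGraph.Reachable.refl _
  | @cons a z _ h p ih =>
    rw [SimpleGraph.Walk.support_cons] at hw
    have hz : z ≠ x := by
      intro h'
      exact hw (List.mem_cons_of_mem _ (h' ▸ p.start_mem_support))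
    have hp : x ∉ p.support := fun hh => hw (List.mem_cons_of_mem _ hh)
    have hadj : (G.induce ({x}ᶜ : Set V)).Adj ⟨a, ha⟩ ⟨z, hz⟩ := by
      simpa using h
    exact hadj.reachable.trans (ih hp hz hb)

/-- a universal vertex distinct from `x` connects everything avoiding `x`. -/
lemma univ_ra {u : V} (hu : ∀ w, w ≠ u → G.Adj u w) (hux : u ≠ x)
    {a b : V} (ha : a ≠ x) (hb : b ≠ x) : RA G x a b := by
  have h1 : RA G x a u := by
    by_cases h : a = u
    · subst h; exact ra_refl ha
    · exact ra_adj (hu a h).symm ha hux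
  have h2 : RA G x u b := by
    by_cases h : b = u
    · subst h; exact ra_refl hux
    · exact ra_adj (hu b h) hux hb
  exact h1.trans h2



lemma mem_of_eq {a b : V} {C : Set V} (h : a = b) (hb : b ∈ C) : a ∈ C := by
  rw [h]; exact hb

/-- vertices adjacent to all other vertices of `C` -/
def Auniv (G : SimpleGraph V) (C : Set V) : Set V :=
  {a | a ∈ C ∧ ∀ w ∈ C, w ≠ a → G.Adj a w}

lemma suff (H : SimpleGraph V) (x v₁ v₂ a₁ b₁ a₂ b₂ : V) (C₁ C₂ : Set V)
    (hcov : ∀ y, y ≠ x → y ∈ C₁ ∨ y ∈ C₂)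
    (hdisj : ∀ y, y ∈ C₁ → y ∉ C₂)
    (hv₁ : v₁ ∈ C₁) (ha₁ : a₁ ∈ C₁) (hb₁ : b₁ ∈ C₁)
    (hv₂ : v₂ ∈ C₂) (ha₂ : a₂ ∈ C₂) (hb₂ : b₂ ∈ C₂)
    (d₁a : a₁ ≠ v₁) (d₁b : b₁ ≠ v₁) (d₁ab : a₁ ≠ b₁)
    (d₂a : a₂ ≠ v₂) (d₂b : b₂ ≠ v₂) (d₂ab : a₂ ≠ b₂)
    (hxv₁ : H.Adj x v₁) (hxv₂ : H.Adj x v₂)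
    (hu₁ : ∀ c, (c = v₁ ∨ c = a₁ ∨ c = b₁) → ∀ w ∈ C₁, w ≠ c → H.Adj c w)
    (hu₂ : ∀ c, (c = v₂ ∨ c = a₂ ∨ c = b₂) → ∀ w ∈ C₂, w ≠ c → H.Adj c w) :
    WinsWithin2 H := by
  have domright : ∀ c, (c = v₂ ∨ c = a₂ ∨ c = b₂) → Dominating H {v₁, c} := by
    intro c hc v hv
    simp only [Set.mem_insert_iff, Set.mem_singleton_iff, not_or] at hv
    obtain ⟨hv1, hvc⟩ := hv
    by_cases hvx : v = x
    · refine ⟨v₁, by simp, ?_⟩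
      rw [hvx]; exact hxv₁.symm
    rcases hcov v hvx with h1 | h2
    · exact ⟨v₁, by simp, hu₁ v₁ (Or.inl rfl) v h1 hv1⟩
    · exact ⟨c, by simp, hu₂ c hc v h2 hvc⟩
  have domleft : ∀ c, (c = v₁ ∨ c = a₁ ∨ c = b₁) → Dominating H {v₂, c} := by
    intro c hc v hv
    simp only [Set.mem_insert_iff, Set.mem_singleton_iff, not_or] at hv
    obtain ⟨hv2, hvc⟩ := hv
    by_cases hvx : v = x
    · refine ⟨v₂, by simp, ?_⟩
      rw [hvx]; exact hxv₂.symm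
    rcases hcov v hvx with h1 | h2
    · exact ⟨c, by simp, hu₁ c hc v h1 hvc⟩
    · exact ⟨v₂, by simp, hu₂ v₂ (Or.inl rfl) v h2 hv2⟩
  intro s₁
  by_cases hs : s₁ = v₁
  · refine ⟨v₂, fun h => hdisj v₁ hv₁ (mem_of_eq (h.trans hs).symm hv₂), Or.inr ?_⟩
    intro s₂ _
    obtain ⟨d, hd, hds⟩ := pick2 a₁ b₁ s₂ d₁ab
    have hdC : d ∈ C₁ := by rcases hd with rfl | rfl <;> assumption
    have hdv₁ : d ≠ v₁ := by rcases hd with rfl | rfl <;> assumption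
    refine ⟨d, ?_, domleft d (Or.inr hd)⟩
    simp only [Set.mem_insert_iff, Set.mem_singleton_iff, not_or]
    exact ⟨fun h => hdv₁ (h.trans hs), fun h => hdisj d hdC (mem_of_eq h hv₂), hds⟩
  · refine ⟨v₁, fun h => hs h.symm, Or.inr ?_⟩
    intro s₂ _
    obtain ⟨d, hd, hds1, hds2⟩ := pick3 v₂ a₂ b₂ s₁ s₂ d₂a.symm d₂b.symm d₂ab
    have hdC : d ∈ C₂ := by rcases hd with rfl | rfl | rfl <;> assumption
    refine ⟨d, ?_, domright d hd⟩
    simp only [Set.mem_insert_iff, Set.mem_singleton_iff, not_or]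
    exact ⟨hds1, fun h => hdisj v₁ hv₁ (mem_of_eq h.symm hdC), hds2⟩

section Games

variable {G : SimpleGraph V} {x v₁ v₂ : V} {C₁ C₂ : Set V}

variable
  (hcov : ∀ y, y ≠ x → y ∈ C₁ ∨ y ∈ C₂)
  (hdisj : ∀ y, y ∈ C₁ → y ∉ C₂)
  (hx1 : x ∉ C₁) (hx2 : x ∉ C₂)
  (hv₁ : v₁ ∈ C₁) (hv₂ : v₂ ∈ C₂)
  (hadjx : ∀ u, G.Adj x u ↔ u = v₁ ∨ u = v₂)
  (hnc : ∀ u ∈ C₁, ∀ w ∈ C₂, ¬ G.Adj u w)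
  (hgap₁ : ∃ y ∈ C₁, y ≠ v₁) (hgap₂ : ∃ y ∈ C₂, y ≠ v₂)

include hcov hdisj hx1 hx2 hv₁ hv₂ hadjx hnc hgap₁ hgap₂ in
lemma dp (d d' : V) (hdom : Dominating G {d, d'}) :
    d ≠ x ∧ d' ≠ x ∧
      ((d ∈ Auniv G C₁ ∧ d' ∈ Auniv G C₂) ∨ (d ∈ Auniv G C₂ ∧ d' ∈ Auniv G C₁)) ∧
      (v₁ = d ∨ v₁ = d' ∨ v₂ = d ∨ v₂ = d') := by
  obtain ⟨y₁, hy₁C, hy₁v⟩ := hgap₁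
  obtain ⟨y₂, hy₂C, hy₂v⟩ := hgap₂
  have hAx : ∀ u, G.Adj x u → u = v₁ ∨ u = v₂ := fun u h => (hadjx u).1 h
  have dne : ∀ e e' : V, Dominating G {e, e'} → e ≠ x := by
    intro e e' hdm hex
    have key : ∀ (y : V), y ∈ C₁ ∪ C₂ → y ≠ v₁ → y ≠ v₂ → y ≠ e' → G.Adj e' y := by
      intro y hyC hyv₁ hyv₂ hye
      have hyx : y ≠ x := by
        rcases hyC with h | h
        · exact fun hh => hx1 (mem_of_eq hh.symm h)
        · exact fun hh => hx2 (mem_of_eq hh.symm h)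
      obtain ⟨dd, hdd, hadj⟩ := hdm y (by
        simp only [Set.mem_insert_iff, Set.mem_singleton_iff, not_or]
        exact ⟨fun hh => hyx (hh.trans hex), fun hh => hye hh⟩)
      simp only [Set.mem_insert_iff, Set.mem_singleton_iff] at hdd
      rcases hdd with h | h
      · exfalso
        have : G.Adj x y := by rw [← hex, ← h]; exact hadj
        rcases hAx y this with h' | h'
        · exact hyv₁ h'
        · exact hyv₂ h'
      · rw [← h]; exact hadj
    have hy₁v₂ : y₁ ≠ v₂ := fun h => hdisj y₁ hy₁C (mem_of_eq h hv₂)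
    have hy₂v₁ : y₂ ≠ v₁ := fun h => hdisj v₁ hv₁ (mem_of_eq h.symm hy₂C)
    have h1 : e' ∈ C₁ := by
      by_cases h : y₁ = e'
      · exact mem_of_eq h.symm hy₁C
      · have hadj := key y₁ (Or.inl hy₁C) hy₁v hy₁v₂ h
        have he'x : e' ≠ x := by
          intro hh
          have : G.Adj x y₁ := by rw [← hh]; exact hadj
          rcases hAx y₁ this with h' | h'
          · exact hy₁v h'
          · exact hy₁v₂ h'
        rcases hcov e' he'x with hh | hh
        · exact hh
        · exact absurd hadj.symm (hnc y₁ hy₁C e' hh)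
    have h2 : e' ∈ C₂ := by
      by_cases h : y₂ = e'
      · exact mem_of_eq h.symm hy₂C
      · have hadj := key y₂ (Or.inr hy₂C) hy₂v₁ hy₂v h
        have he'x : e' ≠ x := by
          intro hh
          have : G.Adj x y₂ := by rw [← hh]; exact hadj
          rcases hAx y₂ this with h' | h'
          · exact hy₂v₁ h'
          · exact hy₂v h'
        rcases hcov e' he'x with hh | hh
        · exact absurd hadj (hnc e' hh y₂ hy₂C)
        · exact hh
    exact hdisj e' h1 h2
  have hdx : d ≠ x := dne d d' hdom
  have hdom' : Dominating G {d', d} := by rwa [Set.pair_comm] at hdom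
  have hd'x : d' ≠ x := dne d' d hdom'
  have huside : ∀ e e' : V, Dominating G {e, e'} → e ∈ C₁ → e' ∈ C₂ →
      e ∈ Auniv G C₁ ∧ e' ∈ Auniv G C₂ := by
    intro e e' hdm heC he'C
    constructor
    · refine ⟨heC, fun w hw hwne => ?_⟩
      obtain ⟨dd, hdd, hadj⟩ := hdm w (by
        simp only [Set.mem_insert_iff, Set.mem_singleton_iff, not_or]
        exact ⟨hwne, fun h => hdisj w hw (mem_of_eq h he'C)⟩)
      simp only [Set.mem_insert_iff, Set.mem_singleton_iff] at hdd
      rcases hdd with h | h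
      · rw [← h]; exact hadj
      · exfalso
        refine hnc w hw e' he'C ?_
        refine SimpleGraph.Adj.symm ?_
        rw [← h]; exact hadj
    · refine ⟨he'C, fun w hw hwne => ?_⟩
      obtain ⟨dd, hdd, hadj⟩ := hdm w (by
        simp only [Set.mem_insert_iff, Set.mem_singleton_iff, not_or]
        exact ⟨fun h => hdisj e heC (mem_of_eq h.symm hw), hwne⟩)
      simp only [Set.mem_insert_iff, Set.mem_singleton_iff] at hdd
      rcases hdd with h | h
      · exfalso
        refine hnc e heC w hw ?_
        rw [← h]; exact hadj
      · rw [← h]; exact hadj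
  refine ⟨hdx, hd'x, ?_, ?_⟩
  · rcases hcov d hdx with hdC | hdC <;> rcases hcov d' hd'x with hd'C | hd'C
    · exfalso
      obtain ⟨dd, hdd, hadj⟩ := hdom v₂ (by
        simp only [Set.mem_insert_iff, Set.mem_singleton_iff, not_or]
        exact ⟨fun h => hdisj d hdC (mem_of_eq h.symm hv₂), fun h => hdisj d' hd'C (mem_of_eq h.symm hv₂)⟩)
      simp only [Set.mem_insert_iff, Set.mem_singleton_iff] at hdd
      rcases hdd with h | h
      · exact hnc d hdC v₂ hv₂ (by rw [h] at hadj; exact hadj)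
      · exact hnc d' hd'C v₂ hv₂ (by rw [h] at hadj; exact hadj)
    · exact Or.inl (huside d d' hdom hdC hd'C)
    · have h := huside d' d hdom' hd'C hdC
      exact Or.inr ⟨h.2, h.1⟩
    · exfalso
      obtain ⟨dd, hdd, hadj⟩ := hdom v₁ (by
        simp only [Set.mem_insert_iff, Set.mem_singleton_iff, not_or]
        exact ⟨fun h => hdisj v₁ hv₁ (mem_of_eq h hdC), fun h => hdisj v₁ hv₁ (mem_of_eq h hd'C)⟩)
      simp only [Set.mem_insert_iff, Set.mem_singleton_iff] at hdd
      rcases hdd with h | h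
      · exact hnc v₁ hv₁ d hdC (by rw [h] at hadj; exact hadj.symm)
      · exact hnc v₁ hv₁ d' hd'C (by rw [h] at hadj; exact hadj.symm)
  · obtain ⟨dd, hdd, hadj⟩ := hdom x (by
      simp only [Set.mem_insert_iff, Set.mem_singleton_iff, not_or]
      exact ⟨fun h => hdx h.symm, fun h => hd'x h.symm⟩)
    simp only [Set.mem_insert_iff, Set.mem_singleton_iff] at hdd
    rcases hdd with h | h
    · rcases hAx dd hadj.symm with h' | h'
      · exact Or.inl (h'.symm.trans h)
      · exact Or.inr (Or.inr (Or.inl (h'.symm.trans h)))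
    · rcases hAx dd hadj.symm with h' | h'
      · exact Or.inr (Or.inl (h'.symm.trans h))
      · exact Or.inr (Or.inr (Or.inr (h'.symm.trans h)))

include hcov hdisj hx1 hx2 hv₁ hv₂ hadjx hnc hgap₁ hgap₂ in
lemma game_side (hW2 : WinsWithin2 G) :
    v₂ ∈ Auniv G C₂ ∧
      ∃ p q, p ∈ Auniv G C₁ ∧ q ∈ Auniv G C₁ ∧ p ≠ q ∧ p ≠ v₁ ∧ q ≠ v₁ := by
  have hv₁₂ : v₁ ≠ v₂ := fun h => hdisj v₁ hv₁ (mem_of_eq h hv₂)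
  obtain ⟨d₁, hd₁ne, hbr⟩ := hW2 v₁
  rcases hbr with hdom1 | hstrat
  · exfalso
    have huniv : ∀ w, w ≠ d₁ → G.Adj d₁ w := by
      intro w hw
      obtain ⟨e, he, hadj⟩ := hdom1 w (by simpa using hw)
      simp only [Set.mem_singleton_iff] at he
      rw [← he]; exact hadj
    by_cases hd₁x : d₁ = x
    · obtain ⟨y₁, hy₁C, hy₁v⟩ := id hgap₁
      have hadj : G.Adj x y₁ := by
        rw [← hd₁x]
        exact huniv y₁ (fun h => hx1 (mem_of_eq (h.trans hd₁x).symm hy₁C))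
      rcases (hadjx y₁).1 hadj with h | h
      · exact hy₁v h
      · exact hdisj y₁ hy₁C (mem_of_eq h hv₂)
    · rcases hcov d₁ hd₁x with hC | hC
      · exact hnc d₁ hC v₂ hv₂ (huniv v₂ (fun h => hdisj d₁ hC (mem_of_eq h.symm hv₂)))
      · exact hnc v₁ hv₁ d₁ hC (huniv v₁ hd₁ne.symm).symm
  · by_cases hd₁x : d₁ = x
    · exfalso
      obtain ⟨d₂, _, hdom⟩ := hstrat v₂ (by
        simp only [Set.mem_insert_iff, Set.mem_singleton_iff, not_or]
        exact ⟨hv₁₂.symm, fun h => hx2 (mem_of_eq (h.trans hd₁x).symm hv₂)⟩)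
      exact (dp hcov hdisj hx1 hx2 hv₁ hv₂ hadjx hnc hgap₁ hgap₂ d₁ d₂ hdom).1 hd₁x
    rcases hcov d₁ hd₁x with hC | hC
    · exfalso
      obtain ⟨d₂, hd₂mem, hdom⟩ := hstrat v₂ (by
        simp only [Set.mem_insert_iff, Set.mem_singleton_iff, not_or]
        exact ⟨hv₁₂.symm, fun h => hdisj d₁ hC (mem_of_eq h.symm hv₂)⟩)
      simp only [Set.mem_insert_iff, Set.mem_singleton_iff, not_or] at hd₂mem
      obtain ⟨hd₂v₁, hd₂d₁, hd₂v₂⟩ := hd₂mem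
      obtain ⟨-, -, -, hv⟩ := dp hcov hdisj hx1 hx2 hv₁ hv₂ hadjx hnc hgap₁ hgap₂ d₁ d₂ hdom
      rcases hv with h | h | h | h
      · exact hd₁ne h.symm
      · exact hd₂v₁ h.symm
      · exact hdisj d₁ hC (mem_of_eq h.symm hv₂)
      · exact hd₂v₂ h.symm
    by_cases hd₁v₂ : d₁ = v₂
    · rw [hd₁v₂] at hstrat
      obtain ⟨y₁, hy₁C, hy₁v⟩ := id hgap₁
      obtain ⟨p, hpmem, hdomp⟩ := hstrat y₁ (by
        simp only [Set.mem_insert_iff, Set.mem_singleton_iff, not_or]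
        exact ⟨hy₁v, fun h => hdisj y₁ hy₁C (mem_of_eq h hv₂)⟩)
      simp only [Set.mem_insert_iff, Set.mem_singleton_iff, not_or] at hpmem
      obtain ⟨hpv₁, hpv₂, hpy₁⟩ := hpmem
      obtain ⟨-, -, hor, -⟩ := dp hcov hdisj hx1 hx2 hv₁ hv₂ hadjx hnc hgap₁ hgap₂ v₂ p hdomp
      rcases hor with ⟨hbad, -⟩ | ⟨hv₂A, hpA⟩
      · exact absurd hv₂ (hdisj v₂ hbad.1)
      obtain ⟨q, hqmem, hdomq⟩ := hstrat p (by
        simp only [Set.mem_insert_iff, Set.mem_singleton_iff, not_or]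
        exact ⟨hpv₁, hpv₂⟩)
      simp only [Set.mem_insert_iff, Set.mem_singleton_iff, not_or] at hqmem
      obtain ⟨hqv₁, hqv₂, hqp⟩ := hqmem
      obtain ⟨-, -, hor', -⟩ := dp hcov hdisj hx1 hx2 hv₁ hv₂ hadjx hnc hgap₁ hgap₂ v₂ q hdomq
      rcases hor' with ⟨hbad, -⟩ | ⟨-, hqA⟩
      · exact absurd hv₂ (hdisj v₂ hbad.1)
      exact ⟨hv₂A, p, q, hpA, hqA, fun h => hqp h.symm, hpv₁, hqv₁⟩
    · exfalso
      obtain ⟨d₂, hd₂mem, hdom⟩ := hstrat v₂ (by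
        simp only [Set.mem_insert_iff, Set.mem_singleton_iff, not_or]
        exact ⟨hv₁₂.symm, fun h => hd₁v₂ h.symm⟩)
      simp only [Set.mem_insert_iff, Set.mem_singleton_iff, not_or] at hd₂mem
      obtain ⟨hd₂v₁, hd₂d₁, hd₂v₂⟩ := hd₂mem
      obtain ⟨-, -, -, hv⟩ := dp hcov hdisj hx1 hx2 hv₁ hv₂ hadjx hnc hgap₁ hgap₂ d₁ d₂ hdom
      rcases hv with h | h | h | h
      · exact hd₁ne h.symm
      · exact hd₂v₁ h.symm
      · exact hd₁v₂ h.symm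
      · exact hd₂v₂ h.symm

include hcov hdisj hx1 hx2 hv₁ hv₂ hadjx hnc in
lemma big (hW2 : WinsWithin2 G)
    (hdel : ∀ u v : V, G.Adj u v → ¬ WinsWithin2 (G.deleteEdges {s(u, v)})) :
    ∃ y ∈ C₂, y ≠ v₂ := by
  by_contra hcon
  push_neg at hcon
  have hv₁₂ : v₁ ≠ v₂ := fun h => hdisj v₁ hv₁ (mem_of_eq h hv₂)
  have hv₁x : v₁ ≠ x := fun h => hx1 (mem_of_eq h.symm hv₁)
  have hv₂x : v₂ ≠ x := fun h => hx2 (mem_of_eq h.symm hv₂)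
  have hAxv₁ : G.Adj x v₁ := (hadjx v₁).2 (Or.inl rfl)
  have hAxv₂ : G.Adj x v₂ := (hadjx v₂).2 (Or.inr rfl)
  have hv₂nbr : ∀ w, G.Adj v₂ w → w = x := by
    intro w hadj
    by_cases hwx : w = x
    · exact hwx
    rcases hcov w hwx with h | h
    · exact absurd hadj.symm (hnc w h v₂ hv₂)
    · exfalso
      rw [hcon w h] at hadj
      exact G.irrefl hadj
  obtain ⟨d₁, hd₁x, hbr⟩ := hW2 x
  rcases hbr with hdom1 | hstrat
  · exfalso
    have huniv : ∀ w, w ≠ d₁ → G.Adj d₁ w := by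
      intro w hw
      obtain ⟨e, he, hadj⟩ := hdom1 w (by simpa using hw)
      simp only [Set.mem_singleton_iff] at he
      rw [← he]; exact hadj
    rcases hcov d₁ hd₁x with hC | hC
    · exact hnc d₁ hC v₂ hv₂ (huniv v₂ (fun h => hdisj d₁ hC (mem_of_eq h.symm hv₂)))
    · refine hnc v₁ hv₁ d₁ hC ?_
      refine (huniv v₁ ?_).symm
      exact fun h => hdisj v₁ hv₁ (mem_of_eq (h.trans (hcon d₁ hC)) hv₂)
  have hpairv₂ : ∀ a b : V, a ≠ x → b ≠ x → Dominating G {a, b} → v₂ = a ∨ v₂ = b := by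
    intro a b hax hbx hdm
    by_cases h1 : v₂ = a
    · exact Or.inl h1
    by_cases h2 : v₂ = b
    · exact Or.inr h2
    exfalso
    obtain ⟨dd, hdd, hadj⟩ := hdm v₂ (by
      simp only [Set.mem_insert_iff, Set.mem_singleton_iff, not_or]
      exact ⟨h1, h2⟩)
    have hddx := hv₂nbr dd hadj.symm
    simp only [Set.mem_insert_iff, Set.mem_singleton_iff] at hdd
    rcases hdd with h | h
    · exact hax (h ▸ hddx)
    · exact hbx (h ▸ hddx)
  have hAmem : ∀ w : V, w ≠ x → w ≠ v₂ → Dominating G {v₂, w} →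
      w ∈ C₁ ∧ ∀ y ∈ C₁, y ≠ w → G.Adj w y := by
    intro w hwx hwv₂ hdm
    have hwC : w ∈ C₁ := by
      rcases hcov w hwx with h | h
      · exact h
      · exact absurd (hcon w h) hwv₂
    refine ⟨hwC, fun y hy hyw => ?_⟩
    obtain ⟨dd, hdd, hadj⟩ := hdm y (by
      simp only [Set.mem_insert_iff, Set.mem_singleton_iff, not_or]
      exact ⟨fun h => hdisj y hy (mem_of_eq h hv₂), hyw⟩)
    simp only [Set.mem_insert_iff, Set.mem_singleton_iff] at hdd
    rcases hdd with h | h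
    · exfalso
      refine hnc y hy v₂ hv₂ ?_
      refine SimpleGraph.Adj.symm ?_
      rw [← h]; exact hadj
    · rw [← h]; exact hadj
  have hd₁v₂ : d₁ = v₂ := by
    by_contra hne
    obtain ⟨d₂, hd₂mem, hdom⟩ := hstrat v₂ (by
      simp only [Set.mem_insert_iff, Set.mem_singleton_iff, not_or]
      exact ⟨hv₂x, fun h => hne h.symm⟩)
    simp only [Set.mem_insert_iff, Set.mem_singleton_iff, not_or] at hd₂mem
    obtain ⟨hd₂x, hd₂d₁, hd₂v₂⟩ := hd₂mem
    rcases hpairv₂ d₁ d₂ hd₁x hd₂x hdom with h | h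
    · exact hne h.symm
    · exact hd₂v₂ h.symm
  rw [hd₁v₂] at hstrat
  obtain ⟨p, hpmem, hdomp⟩ := hstrat v₁ (by
    simp only [Set.mem_insert_iff, Set.mem_singleton_iff, not_or]
    exact ⟨hv₁x, hv₁₂⟩)
  simp only [Set.mem_insert_iff, Set.mem_singleton_iff, not_or] at hpmem
  obtain ⟨hpx, hpv₂, hpv₁⟩ := hpmem
  obtain ⟨hpC, hpA⟩ := hAmem p hpx hpv₂ hdomp
  obtain ⟨q, hqmem, hdomq⟩ := hstrat p (by
    simp only [Set.mem_insert_iff, Set.mem_singleton_iff, not_or]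
    exact ⟨hpx, hpv₂⟩)
  simp only [Set.mem_insert_iff, Set.mem_singleton_iff, not_or] at hqmem
  obtain ⟨hqx, hqv₂, hqp⟩ := hqmem
  obtain ⟨hqC, hqA⟩ := hAmem q hqx hqv₂ hdomq
  have hpq : p ≠ q := fun h => hqp h.symm
  apply hdel x v₁ hAxv₁
  have hne_xv₁ : ∀ a b : V, a ≠ x → b ≠ x → s(a, b) ∉ ({s(x, v₁)} : Set (Sym2 V)) := by
    intro a b hax hbx h
    rw [Set.mem_singleton_iff, Sym2.eq_iff] at h
    rcases h with ⟨h, -⟩ | ⟨-, h⟩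
    · exact hax h
    · exact hbx h
  have hHxv₂ : (G.deleteEdges {s(x, v₁)}).Adj x v₂ := by
    rw [SimpleGraph.deleteEdges_adj]
    refine ⟨hAxv₂, ?_⟩
    intro h
    rw [Set.mem_singleton_iff, Sym2.eq_iff] at h
    rcases h with ⟨-, h⟩ | ⟨h, -⟩
    · exact hv₁₂ h.symm
    · exact hv₁x h.symm
  have hHw : ∀ w, w ∈ C₁ → (∀ y ∈ C₁, y ≠ w → G.Adj w y) →
      ∀ y ∈ C₁, y ≠ w → (G.deleteEdges {s(x, v₁)}).Adj w y := by
    intro w hwC hA y hy hyw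
    rw [SimpleGraph.deleteEdges_adj]
    exact ⟨hA y hy hyw,
      hne_xv₁ w y (fun h => hx1 (mem_of_eq h.symm hwC)) (fun h => hx1 (mem_of_eq h.symm hy))⟩
  have hdomA : ∀ w, w ∈ C₁ → (∀ y ∈ C₁, y ≠ w → G.Adj w y) →
      Dominating (G.deleteEdges {s(x, v₁)}) {v₂, w} := by
    intro w hwC hA v hv
    simp only [Set.mem_insert_iff, Set.mem_singleton_iff, not_or] at hv
    obtain ⟨hvv₂, hvw⟩ := hv
    by_cases hvx : v = x
    · refine ⟨v₂, by simp, ?_⟩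
      rw [hvx]; exact hHxv₂.symm
    rcases hcov v hvx with h | h
    · exact ⟨w, by simp, hHw w hwC hA v h hvw⟩
    · exact absurd (hcon v h) hvv₂
  have hdomB : ∀ w, w ∈ C₁ → (∀ y ∈ C₁, y ≠ w → G.Adj w y) →
      Dominating (G.deleteEdges {s(x, v₁)}) {x, w} := by
    intro w hwC hA v hv
    simp only [Set.mem_insert_iff, Set.mem_singleton_iff, not_or] at hv
    obtain ⟨hvx, hvw⟩ := hv
    rcases hcov v hvx with h | h
    · exact ⟨w, by simp, hHw w hwC hA v h hvw⟩
    · refine ⟨x, by simp, ?_⟩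
      rw [hcon v h]; exact hHxv₂
  have hWA : ∀ w, (w = p ∨ w = q) → w ∈ C₁ ∧ (∀ y ∈ C₁, y ≠ w → G.Adj w y) := by
    rintro w (rfl | rfl)
    · exact ⟨hpC, hpA⟩
    · exact ⟨hqC, hqA⟩
  intro s₁
  by_cases hs₁x : s₁ = x
  · refine ⟨v₂, fun h => hv₂x (h.trans hs₁x), Or.inr ?_⟩
    intro s₂ _
    obtain ⟨d, hd, hds⟩ := pick2 p q s₂ hpq
    obtain ⟨hdC, hdA⟩ := hWA d hd
    refine ⟨d, ?_, hdomA d hdC hdA⟩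
    simp only [Set.mem_insert_iff, Set.mem_singleton_iff, not_or]
    exact ⟨fun h => hx1 (mem_of_eq (h.trans hs₁x).symm hdC),
      fun h => hdisj d hdC (mem_of_eq h hv₂), hds⟩
  by_cases hs₁v₂ : s₁ = v₂
  · refine ⟨x, fun h => hs₁x h.symm, Or.inr ?_⟩
    intro s₂ _
    obtain ⟨d, hd, hds⟩ := pick2 p q s₂ hpq
    obtain ⟨hdC, hdA⟩ := hWA d hd
    refine ⟨d, ?_, hdomB d hdC hdA⟩
    simp only [Set.mem_insert_iff, Set.mem_singleton_iff, not_or]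
    exact ⟨fun h => hdisj d hdC (mem_of_eq (h.trans hs₁v₂) hv₂),
      fun h => hx1 (mem_of_eq h.symm hdC), hds⟩
  by_cases hs₁p : s₁ = p
  · refine ⟨q, fun h => hqp (h.trans hs₁p), Or.inr ?_⟩
    intro s₂ _
    obtain ⟨d, hd, hds⟩ := pick2 x v₂ s₂ (fun h => hv₂x h.symm)
    have hdmem : d ∉ ({s₁, q, s₂} : Set V) := by
      simp only [Set.mem_insert_iff, Set.mem_singleton_iff, not_or]
      refine ⟨?_, ?_, hds⟩
      · rcases hd with rfl | rfl
        · exact fun h => hpx (hs₁p ▸ h.symm)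
        · exact fun h => hpv₂ (hs₁p ▸ h.symm)
      · rcases hd with rfl | rfl
        · exact fun h => hqx h.symm
        · exact fun h => hqv₂ h.symm
    refine ⟨d, hdmem, ?_⟩
    rcases hd with rfl | rfl
    · have := hdomB q hqC hqA
      rwa [Set.pair_comm] at this
    · have := hdomA q hqC hqA
      rwa [Set.pair_comm] at this
  by_cases hs₁q : s₁ = q
  · refine ⟨p, fun h => hpq (h.trans hs₁q), Or.inr ?_⟩
    intro s₂ _
    obtain ⟨d, hd, hds⟩ := pick2 x v₂ s₂ (fun h => hv₂x h.symm)
    have hdmem : d ∉ ({s₁, p, s₂} : Set V) := by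
      simp only [Set.mem_insert_iff, Set.mem_singleton_iff, not_or]
      refine ⟨?_, ?_, hds⟩
      · rcases hd with rfl | rfl
        · exact fun h => hqx (hs₁q ▸ h.symm)
        · exact fun h => hqv₂ (hs₁q ▸ h.symm)
      · rcases hd with rfl | rfl
        · exact fun h => hpx h.symm
        · exact fun h => hpv₂ h.symm
    refine ⟨d, hdmem, ?_⟩
    rcases hd with rfl | rfl
    · have := hdomB p hpC hpA
      rwa [Set.pair_comm] at this
    · have := hdomA p hpC hpA
      rwa [Set.pair_comm] at this
  · refine ⟨v₂, fun h => hs₁v₂ h.symm, Or.inr ?_⟩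
    intro s₂ _
    obtain ⟨d, hd, hds⟩ := pick2 p q s₂ hpq
    obtain ⟨hdC, hdA⟩ := hWA d hd
    refine ⟨d, ?_, hdomA d hdC hdA⟩
    simp only [Set.mem_insert_iff, Set.mem_singleton_iff, not_or]
    refine ⟨?_, fun h => hdisj d hdC (mem_of_eq h hv₂), hds⟩
    rcases hd with rfl | rfl
    · exact fun h => hs₁p h.symm
    · exact fun h => hs₁q h.symm

include hcov hdisj hx1 hx2 hv₁ hv₂ hadjx hnc in
lemma structure_side
    (hdel : ∀ u v : V, G.Adj u v → ¬ WinsWithin2 (G.deleteEdges {s(u, v)}))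
    (hv₁A : v₁ ∈ Auniv G C₁) (hv₂A : v₂ ∈ Auniv G C₂)
    (p q : V) (hpA : p ∈ Auniv G C₁) (hqA : q ∈ Auniv G C₁)
    (hpq : p ≠ q) (hpv : p ≠ v₁) (hqv : q ≠ v₁)
    (p₂ q₂ : V) (hp₂A : p₂ ∈ Auniv G C₂) (hq₂A : q₂ ∈ Auniv G C₂)
    (hpq₂ : p₂ ≠ q₂) (hp₂v : p₂ ≠ v₂) (hq₂v : q₂ ≠ v₂) :
    ∀ w ∈ C₁, w ≠ v₁ → w ≠ p → w ≠ q → ∀ w' ∈ C₁, w' ≠ v₁ → w' ≠ p → w' ≠ q →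
      ¬ G.Adj w w' := by
  intro w hw hwv hwp hwq w' hw' hw'v hw'p hw'q hadj
  apply hdel w w' hadj
  have hsym : ∀ a b : V, a ≠ w → a ≠ w' → G.Adj a b →
      (G.deleteEdges {s(w, w')}).Adj a b := by
    intro a b haw haw' hadj'
    rw [SimpleGraph.deleteEdges_adj]
    refine ⟨hadj', ?_⟩
    intro h
    rw [Set.mem_singleton_iff, Sym2.eq_iff] at h
    rcases h with ⟨h, -⟩ | ⟨h, -⟩
    · exact haw h
    · exact haw' h
  have hxw : x ≠ w := fun h => hx1 (mem_of_eq h hw)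
  have hxw' : x ≠ w' := fun h => hx1 (mem_of_eq h hw')
  refine suff (G.deleteEdges {s(w, w')}) x v₁ v₂ p q p₂ q₂ C₁ C₂ hcov hdisj
    hv₁A.1 hpA.1 hqA.1 hv₂A.1 hp₂A.1 hq₂A.1 hpv hqv hpq hp₂v hq₂v hpq₂
    (hsym x v₁ hxw hxw' ((hadjx v₁).2 (Or.inl rfl)))
    (hsym x v₂ hxw hxw' ((hadjx v₂).2 (Or.inr rfl)))
    ?_ ?_
  · intro c hc y hy hyc
    have hcA : c ∈ Auniv G C₁ := by
      rcases hc with rfl | rfl | rfl <;> assumption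
    have hcw : c ≠ w := by
      rcases hc with rfl | rfl | rfl
      · exact fun h => hwv h.symm
      · exact fun h => hwp h.symm
      · exact fun h => hwq h.symm
    have hcw' : c ≠ w' := by
      rcases hc with rfl | rfl | rfl
      · exact fun h => hw'v h.symm
      · exact fun h => hw'p h.symm
      · exact fun h => hw'q h.symm
    exact hsym c y hcw hcw' (hcA.2 y hy hyc)
  · intro c hc y hy hyc
    have hcA : c ∈ Auniv G C₂ := by
      rcases hc with rfl | rfl | rfl <;> assumption
    have hcw : c ≠ w := fun h => hdisj w hw (mem_of_eq h.symm hcA.1)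
    have hcw' : c ≠ w' := fun h => hdisj w' hw' (mem_of_eq h.symm hcA.1)
    exact hsym c y hcw hcw' (hcA.2 y hy hyc)

end Games

lemma memF_of_eq {a b : V} {C : Finset V} (h : a = b) (hb : b ∈ C) : a ∈ C := by
  rw [h]; exact hb

noncomputable def psi (h₁ h₂ : V) (R : Finset V) (m : ℕ) (hm : R.card + 2 = m) (i : Fin m) : V :=
  if h0 : i.val = 0 then h₁ else if h1 : i.val = 1 then h₂
  else ((R.equivFin.symm ⟨i.val - 2, by have h := i.isLt; omega⟩ : R) : V)

lemma psi_spec (h₁ h₂ : V) (R : Finset V) (m : ℕ) (hm : R.card + 2 = m) (i : Fin m) :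
    (i.val = 0 ∧ psi h₁ h₂ R m hm i = h₁) ∨ (i.val = 1 ∧ psi h₁ h₂ R m hm i = h₂) ∨
      (2 ≤ i.val ∧ psi h₁ h₂ R m hm i ∈ R) := by
  unfold psi
  split_ifs with h0 h1
  · exact Or.inl ⟨h0, rfl⟩
  · exact Or.inr (Or.inl ⟨h1, rfl⟩)
  · exact Or.inr (Or.inr ⟨by omega, Finset.coe_mem _⟩)

lemma psi_pack (h₁ h₂ : V) (R : Finset V) (m : ℕ) (hm : R.card + 2 = m)
    (hne : h₁ ≠ h₂) (hR1 : h₁ ∉ R) (hR2 : h₂ ∉ R) :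
    ∃ ψ : Fin m → V, Function.Injective ψ ∧
      ∀ i, (i.val = 0 ∧ ψ i = h₁) ∨ (i.val = 1 ∧ ψ i = h₂) ∨ (2 ≤ i.val ∧ ψ i ∈ R) := by
  refine ⟨psi h₁ h₂ R m hm, ?_, psi_spec h₁ h₂ R m hm⟩
  intro i j hij
  rcases psi_spec h₁ h₂ R m hm i with ⟨hi, ei⟩ | ⟨hi, ei⟩ | ⟨hi, ei⟩ <;>
    rcases psi_spec h₁ h₂ R m hm j with ⟨hj, ej⟩ | ⟨hj, ej⟩ | ⟨hj, ej⟩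
  · exact Fin.ext (hi.trans hj.symm)
  · exact absurd (ei.symm.trans (hij.trans ej)) hne
  · exfalso; rw [← hij, ei] at ej; exact hR1 ej
  · exact absurd (ej.symm.trans (hij.symm.trans ei)) hne
  · exact Fin.ext (hi.trans hj.symm)
  · exfalso; rw [← hij, ei] at ej; exact hR2 ej
  · exfalso; rw [hij, ej] at ei; exact hR1 ei
  · exfalso; rw [hij, ej] at ei; exact hR2 ei
  · have hi0 : ¬ i.val = 0 := by omega
    have hi1 : ¬ i.val = 1 := by omega
    have hj0 : ¬ j.val = 0 := by omega
    have hj1 : ¬ j.val = 1 := by omega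
    unfold psi at hij
    rw [dif_neg hi0, dif_neg hi1, dif_neg hj0, dif_neg hj1] at hij
    have h := R.equivFin.symm.injective (Subtype.coe_injective hij)
    have h' : i.val - 2 = j.val - 2 := by simpa [Fin.mk.injEq] using h
    exact Fin.ext (by omega)

def gfun (x v₁ v₂ : V) {m₁ m₂ : ℕ} (ψ₁ : Fin m₁ → V) (ψ₂ : Fin m₂ → V) :
    FVert m₁ 1 m₂ → V
  | .inl (.inl i) => ψ₁ i
  | .inl (.inr i) => ψ₂ i
  | .inr (.inl _) => x
  | .inr (.inr k) => if k = (0 : Fin 2) then v₁ else v₂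

section FAdj
variable {m₁ m₂ : ℕ}

lemma Fll (i j : Fin m₁) : (FGraph m₁ 1 m₂).Adj (.inl (.inl i)) (.inl (.inl j)) ↔
    (i ≠ j ∧ (i.val < 2 ∨ j.val < 2)) := by simp [FGraph, SimpleGraph.fromRel_adj]

lemma Frr (i j : Fin m₂) : (FGraph m₁ 1 m₂).Adj (.inl (.inr i)) (.inl (.inr j)) ↔
    (i ≠ j ∧ (i.val < 2 ∨ j.val < 2)) := by simp [FGraph, SimpleGraph.fromRel_adj]

lemma Flr (i : Fin m₁) (j : Fin m₂) :
    ¬ (FGraph m₁ 1 m₂).Adj (.inl (.inl i)) (.inl (.inr j)) := by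
  simp [FGraph, SimpleGraph.fromRel_adj]

lemma Flb (i : Fin m₁) (b : Fin 1) :
    ¬ (FGraph m₁ 1 m₂).Adj (.inl (.inl i)) (.inr (.inl b)) := by
  simp [FGraph, SimpleGraph.fromRel_adj]

lemma Frb (i : Fin m₂) (b : Fin 1) :
    ¬ (FGraph m₁ 1 m₂).Adj (.inl (.inr i)) (.inr (.inl b)) := by
  simp [FGraph, SimpleGraph.fromRel_adj]

lemma Flv (i : Fin m₁) (k : Fin 2) :
    (FGraph m₁ 1 m₂).Adj (.inl (.inl i)) (.inr (.inr k)) ↔ k = 0 := by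
  constructor
  · intro h
    by_contra hk
    have hk1 : k = 1 := by omega
    subst hk1
    revert h
    simp [FGraph, SimpleGraph.fromRel_adj]
  · rintro rfl
    simp [FGraph, SimpleGraph.fromRel_adj]

lemma Frv (i : Fin m₂) (k : Fin 2) :
    (FGraph m₁ 1 m₂).Adj (.inl (.inr i)) (.inr (.inr k)) ↔ k = 1 := by
  constructor
  · intro h
    by_contra hk
    have hk1 : k = 0 := by omega
    subst hk1
    revert h
    simp [FGraph, SimpleGraph.fromRel_adj]
  · rintro rfl
    simp [FGraph, SimpleGraph.fromRel_adj]

lemma Fbb (b b' : Fin 1) :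
    ¬ (FGraph m₁ 1 m₂).Adj (.inr (.inl b)) (.inr (.inl b')) := by
  simp [FGraph, SimpleGraph.fromRel_adj]

lemma Fbv (b : Fin 1) (k : Fin 2) :
    (FGraph m₁ 1 m₂).Adj (.inr (.inl b)) (.inr (.inr k)) := by
  simp [FGraph, SimpleGraph.fromRel_adj]

lemma Fvv (k k' : Fin 2) :
    ¬ (FGraph m₁ 1 m₂).Adj (.inr (.inr k)) (.inr (.inr k')) := by
  simp [FGraph, SimpleGraph.fromRel_adj]

end FAdj

lemma buildIso (G : SimpleGraph V) [Fintype V]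
    (x v₁ v₂ h₁ h₂ k₁ k₂ : V) (K₁ K₂ : Finset V) (m₁ m₂ : ℕ)
    (hm₁ : K₁.card = m₁ + 1) (hm₂ : K₂.card = m₂ + 1)
    (Hx1 : x ∉ K₁) (Hx2 : x ∉ K₂)
    (Hdisj : ∀ y, y ∈ K₁ → y ∉ K₂)
    (Hcov : ∀ y : V, y ≠ x → y ∈ K₁ ∨ y ∈ K₂)
    (hv₁K : v₁ ∈ K₁) (hh₁K : h₁ ∈ K₁) (hh₂K : h₂ ∈ K₁)
    (hd₁ : h₁ ≠ v₁) (hd₂ : h₂ ≠ v₁) (hd₃ : h₁ ≠ h₂)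
    (hv₂K : v₂ ∈ K₂) (hk₁K : k₁ ∈ K₂) (hk₂K : k₂ ∈ K₂)
    (he₁ : k₁ ≠ v₂) (he₂ : k₂ ≠ v₂) (he₃ : k₁ ≠ k₂)
    (Hadjx : ∀ u, G.Adj x u ↔ u = v₁ ∨ u = v₂)
    (Hnc : ∀ u ∈ K₁, ∀ w ∈ K₂, ¬ G.Adj u w)
    (Hadj₁ : ∀ u ∈ K₁, ∀ w ∈ K₁, u ≠ w →
      (G.Adj u w ↔ ((u = v₁ ∨ u = h₁ ∨ u = h₂) ∨ (w = v₁ ∨ w = h₁ ∨ w = h₂))))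
    (Hadj₂ : ∀ u ∈ K₂, ∀ w ∈ K₂, u ≠ w →
      (G.Adj u w ↔ ((u = v₂ ∨ u = k₁ ∨ u = k₂) ∨ (w = v₂ ∨ w = k₁ ∨ w = k₂)))) :
    Nonempty (G ≃g FGraph m₁ 1 m₂) := by
  classical
  -- the two residual finsets
  have hR₁mem : ∀ a ∈ ((K₁.erase v₁).erase h₁).erase h₂,
      a ∈ K₁ ∧ a ≠ v₁ ∧ a ≠ h₁ ∧ a ≠ h₂ := by
    intro a ha
    simp only [Finset.mem_erase] at ha
    exact ⟨ha.2.2.2, ha.2.2.1, ha.2.1, ha.1⟩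
  have hR₂mem : ∀ a ∈ ((K₂.erase v₂).erase k₁).erase k₂,
      a ∈ K₂ ∧ a ≠ v₂ ∧ a ≠ k₁ ∧ a ≠ k₂ := by
    intro a ha
    simp only [Finset.mem_erase] at ha
    exact ⟨ha.2.2.2, ha.2.2.1, ha.2.1, ha.1⟩
  have hcard₁ : (((K₁.erase v₁).erase h₁).erase h₂).card + 2 = m₁ := by
    have e2 : h₁ ∈ K₁.erase v₁ := Finset.mem_erase.2 ⟨hd₁, hh₁K⟩
    have e1 : h₂ ∈ (K₁.erase v₁).erase h₁ :=
      Finset.mem_erase.2 ⟨hd₃.symm, Finset.mem_erase.2 ⟨hd₂, hh₂K⟩⟩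
    have c3 := Finset.card_erase_of_mem e1
    have c2 := Finset.card_erase_of_mem e2
    have c1 := Finset.card_erase_of_mem hv₁K
    have h3 : 3 ≤ K₁.card := by
      have hsub : ({v₁, h₁, h₂} : Finset V) ⊆ K₁ := by
        intro a ha
        simp only [Finset.mem_insert, Finset.mem_singleton] at ha
        rcases ha with rfl | rfl | rfl <;> assumption
      have hcard : ({v₁, h₁, h₂} : Finset V).card = 3 := by
        rw [Finset.card_insert_of_notMem, Finset.card_insert_of_notMem,
          Finset.card_singleton]
        · simp only [Finset.mem_singleton]; exact hd₃
        · simp only [Finset.mem_insert, Finset.mem_singleton]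
          push_neg
          exact ⟨fun h => hd₁ h.symm, fun h => hd₂ h.symm⟩
      have := Finset.card_le_card hsub
      omega
    omega
  have hcard₂ : (((K₂.erase v₂).erase k₁).erase k₂).card + 2 = m₂ := by
    have e2 : k₁ ∈ K₂.erase v₂ := Finset.mem_erase.2 ⟨he₁, hk₁K⟩
    have e1 : k₂ ∈ (K₂.erase v₂).erase k₁ :=
      Finset.mem_erase.2 ⟨he₃.symm, Finset.mem_erase.2 ⟨he₂, hk₂K⟩⟩
    have c3 := Finset.card_erase_of_mem e1
    have c2 := Finset.card_erase_of_mem e2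
    have c1 := Finset.card_erase_of_mem hv₂K
    have h3 : 3 ≤ K₂.card := by
      have hsub : ({v₂, k₁, k₂} : Finset V) ⊆ K₂ := by
        intro a ha
        simp only [Finset.mem_insert, Finset.mem_singleton] at ha
        rcases ha with rfl | rfl | rfl <;> assumption
      have hcard : ({v₂, k₁, k₂} : Finset V).card = 3 := by
        rw [Finset.card_insert_of_notMem, Finset.card_insert_of_notMem,
          Finset.card_singleton]
        · simp only [Finset.mem_singleton]; exact he₃
        · simp only [Finset.mem_insert, Finset.mem_singleton]
          push_neg
          exact ⟨fun h => he₁ h.symm, fun h => he₂ h.symm⟩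
      have := Finset.card_le_card hsub
      omega
    omega
  obtain ⟨ψ₁, inj₁, spec₁⟩ := psi_pack h₁ h₂ _ m₁ hcard₁ hd₃
    (fun h => ((hR₁mem h₁ h).2.2.1) rfl) (fun h => ((hR₁mem h₂ h).2.2.2) rfl)
  obtain ⟨ψ₂, inj₂, spec₂⟩ := psi_pack k₁ k₂ _ m₂ hcard₂ he₃
    (fun h => ((hR₂mem k₁ h).2.2.1) rfl) (fun h => ((hR₂mem k₂ h).2.2.2) rfl)
  have mem₁ : ∀ i, ψ₁ i ∈ K₁ ∧ ψ₁ i ≠ v₁ := by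
    intro i
    rcases spec₁ i with ⟨-, e⟩ | ⟨-, e⟩ | ⟨-, e⟩
    · rw [e]; exact ⟨hh₁K, hd₁⟩
    · rw [e]; exact ⟨hh₂K, hd₂⟩
    · obtain ⟨hK, hv, -, -⟩ := hR₁mem _ e; exact ⟨hK, hv⟩
  have mem₂ : ∀ i, ψ₂ i ∈ K₂ ∧ ψ₂ i ≠ v₂ := by
    intro i
    rcases spec₂ i with ⟨-, e⟩ | ⟨-, e⟩ | ⟨-, e⟩
    · rw [e]; exact ⟨hk₁K, he₁⟩
    · rw [e]; exact ⟨hk₂K, he₂⟩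
    · obtain ⟨hK, hv, -, -⟩ := hR₂mem _ e; exact ⟨hK, hv⟩
  have hub₁ : ∀ i : Fin m₁, (ψ₁ i = v₁ ∨ ψ₁ i = h₁ ∨ ψ₁ i = h₂) ↔ i.val < 2 := by
    intro i
    rcases spec₁ i with ⟨hv, e⟩ | ⟨hv, e⟩ | ⟨hv, e⟩
    · exact iff_of_true (Or.inr (Or.inl e)) (by omega)
    · exact iff_of_true (Or.inr (Or.inr e)) (by omega)
    · refine iff_of_false ?_ (by omega)
      obtain ⟨-, hv', hhh1, hhh2⟩ := hR₁mem _ e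
      rintro (h | h | h)
      · exact hv' h
      · exact hhh1 h
      · exact hhh2 h
  have hub₂ : ∀ i : Fin m₂, (ψ₂ i = v₂ ∨ ψ₂ i = k₁ ∨ ψ₂ i = k₂) ↔ i.val < 2 := by
    intro i
    rcases spec₂ i with ⟨hv, e⟩ | ⟨hv, e⟩ | ⟨hv, e⟩
    · exact iff_of_true (Or.inr (Or.inl e)) (by omega)
    · exact iff_of_true (Or.inr (Or.inr e)) (by omega)
    · refine iff_of_false ?_ (by omega)
      obtain ⟨-, hv', hhh1, hhh2⟩ := hR₂mem _ e
      rintro (h | h | h)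
      · exact hv' h
      · exact hhh1 h
      · exact hhh2 h
  -- injectivity of the glueing map
  have hginj : Function.Injective (gfun x v₁ v₂ ψ₁ ψ₂) := by
    intro a b hab
    rcases a with (i | i) | (b₀ | k) <;> rcases b with (j | j) | (b₁ | k') <;>
      simp only [gfun] at hab
    · exact congrArg (fun t => Sum.inl (Sum.inl t)) (inj₁ hab)
    · exfalso
      have := (mem₁ i).1
      rw [hab] at this
      exact Hdisj _ this (mem₂ j).1
    · exfalso
      have := (mem₁ i).1
      rw [hab] at this
      exact Hx1 this
    · exfalso
      by_cases hk : k' = 0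
      · rw [if_pos hk] at hab
        exact (mem₁ i).2 hab
      · rw [if_neg hk] at hab
        have := (mem₁ i).1
        rw [hab] at this
        exact Hdisj _ this hv₂K
    · exfalso
      have := (mem₂ i).1
      rw [hab] at this
      exact Hdisj _ (mem₁ j).1 this
    · exact congrArg (fun t => Sum.inl (Sum.inr t)) (inj₂ hab)
    · exfalso
      have := (mem₂ i).1
      rw [hab] at this
      exact Hx2 this
    · exfalso
      by_cases hk : k' = 0
      · rw [if_pos hk] at hab
        have := (mem₂ i).1
        rw [hab] at this
        exact Hdisj _ hv₁K this
      · rw [if_neg hk] at hab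
        exact (mem₂ i).2 hab
    · exfalso
      have := (mem₁ j).1
      rw [← hab] at this
      exact Hx1 this
    · exfalso
      have := (mem₂ j).1
      rw [← hab] at this
      exact Hx2 this
    · exact congrArg (fun t => Sum.inr (Sum.inl t)) (Subsingleton.elim b₀ b₁)
    · exfalso
      by_cases hk : k' = 0
      · rw [if_pos hk] at hab
        exact Hx1 (memF_of_eq hab hv₁K)
      · rw [if_neg hk] at hab
        exact Hx2 (memF_of_eq hab hv₂K)
    · exfalso
      by_cases hk : k = 0
      · rw [if_pos hk] at hab
        exact (mem₁ j).2 hab.symm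
      · rw [if_neg hk] at hab
        have := (mem₁ j).1
        rw [← hab] at this
        exact Hdisj _ this hv₂K
    · exfalso
      by_cases hk : k = 0
      · rw [if_pos hk] at hab
        have := (mem₂ j).1
        rw [← hab] at this
        exact Hdisj _ hv₁K this
      · rw [if_neg hk] at hab
        exact (mem₂ j).2 hab.symm
    · exfalso
      by_cases hk : k = 0
      · rw [if_pos hk] at hab
        exact Hx1 (memF_of_eq hab.symm hv₁K)
      · rw [if_neg hk] at hab
        exact Hx2 (memF_of_eq hab.symm hv₂K)
    · by_cases hk : k = 0 <;> by_cases hk' : k' = 0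
      · rw [hk, hk']
      · exfalso
        rw [if_pos hk, if_neg hk'] at hab
        exact Hdisj _ hv₁K (memF_of_eq hab hv₂K)
      · exfalso
        rw [if_neg hk, if_pos hk'] at hab
        exact Hdisj _ hv₁K (memF_of_eq hab.symm hv₂K)
      · have : k = k' := by omega
        rw [this]
  -- cardinality
  have hcardV : Fintype.card V = m₁ + m₂ + 3 := by
    have huniv : (Finset.univ : Finset V) = (K₁ ∪ K₂) ∪ {x} := by
      ext y
      simp only [Finset.mem_univ, true_iff, Finset.mem_union, Finset.mem_singleton]
      by_cases hy : y = x
      · exact Or.inr hy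
      · exact Or.inl (Hcov y hy)
    have hdisjF : Disjoint K₁ K₂ := Finset.disjoint_left.2 (fun {a} ha hb => Hdisj a ha hb)
    have hdisjx : Disjoint (K₁ ∪ K₂) ({x} : Finset V) := by
      simp only [Finset.disjoint_singleton_right, Finset.mem_union]
      push_neg
      exact ⟨Hx1, Hx2⟩
    have := Finset.card_univ (α := V)
    rw [← this, huniv, Finset.card_union_of_disjoint hdisjx,
      Finset.card_union_of_disjoint hdisjF, Finset.card_singleton, hm₁, hm₂]
    omega
  have hcardF : Fintype.card (FVert m₁ 1 m₂) = Fintype.card V := by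
    simp only [FVert, Fintype.card_sum, Fintype.card_fin]
    omega
  have hbij : Function.Bijective (gfun x v₁ v₂ ψ₁ ψ₂) :=
    (Fintype.bijective_iff_injective_and_card _).2 ⟨hginj, hcardF⟩
  -- adjacency cases, unordered
  have cll : ∀ i j : Fin m₁, G.Adj (ψ₁ i) (ψ₁ j) ↔
      (FGraph m₁ 1 m₂).Adj (.inl (.inl i)) (.inl (.inl j)) := by
    intro i j
    rw [Fll]
    constructor
    · intro hA
      refine ⟨fun h => hA.ne (congrArg ψ₁ h), ?_⟩
      rcases (Hadj₁ _ (mem₁ i).1 _ (mem₁ j).1 hA.ne).1 hA with h | h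
      · exact Or.inl ((hub₁ i).1 h)
      · exact Or.inr ((hub₁ j).1 h)
    · rintro ⟨hne, hlt⟩
      refine (Hadj₁ _ (mem₁ i).1 _ (mem₁ j).1 (fun h => hne (inj₁ h))).2 ?_
      rcases hlt with h | h
      · exact Or.inl ((hub₁ i).2 h)
      · exact Or.inr ((hub₁ j).2 h)
  have crr : ∀ i j : Fin m₂, G.Adj (ψ₂ i) (ψ₂ j) ↔
      (FGraph m₁ 1 m₂).Adj (.inl (.inr i)) (.inl (.inr j)) := by
    intro i j
    rw [Frr]
    constructor
    · intro hA
      refine ⟨fun h => hA.ne (congrArg ψ₂ h), ?_⟩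
      rcases (Hadj₂ _ (mem₂ i).1 _ (mem₂ j).1 hA.ne).1 hA with h | h
      · exact Or.inl ((hub₂ i).1 h)
      · exact Or.inr ((hub₂ j).1 h)
    · rintro ⟨hne, hlt⟩
      refine (Hadj₂ _ (mem₂ i).1 _ (mem₂ j).1 (fun h => hne (inj₂ h))).2 ?_
      rcases hlt with h | h
      · exact Or.inl ((hub₂ i).2 h)
      · exact Or.inr ((hub₂ j).2 h)
  have clr : ∀ (i : Fin m₁) (j : Fin m₂), G.Adj (ψ₁ i) (ψ₂ j) ↔
      (FGraph m₁ 1 m₂).Adj (.inl (.inl i)) (.inl (.inr j)) :=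
    fun i j => iff_of_false (Hnc _ (mem₁ i).1 _ (mem₂ j).1) (Flr i j)
  have hAdjxn₁ : ∀ i : Fin m₁, ¬ G.Adj (ψ₁ i) x := by
    intro i h
    rcases (Hadjx _).1 h.symm with hh | hh
    · exact (mem₁ i).2 hh
    · exact Hdisj _ (mem₁ i).1 (memF_of_eq hh hv₂K)
  have hAdjxn₂ : ∀ i : Fin m₂, ¬ G.Adj (ψ₂ i) x := by
    intro i h
    rcases (Hadjx _).1 h.symm with hh | hh
    · exact Hdisj _ (memF_of_eq hh hv₁K) (mem₂ i).1
    · exact (mem₂ i).2 hh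
  have clb : ∀ (i : Fin m₁) (b : Fin 1), G.Adj (ψ₁ i) x ↔
      (FGraph m₁ 1 m₂).Adj (.inl (.inl i)) (.inr (.inl b)) :=
    fun i b => iff_of_false (hAdjxn₁ i) (Flb i b)
  have crb : ∀ (i : Fin m₂) (b : Fin 1), G.Adj (ψ₂ i) x ↔
      (FGraph m₁ 1 m₂).Adj (.inl (.inr i)) (.inr (.inl b)) :=
    fun i b => iff_of_false (hAdjxn₂ i) (Frb i b)
  have clv : ∀ (i : Fin m₁) (k : Fin 2), G.Adj (ψ₁ i) (if k = 0 then v₁ else v₂) ↔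
      (FGraph m₁ 1 m₂).Adj (.inl (.inl i)) (.inr (.inr k)) := by
    intro i k
    rw [Flv]
    by_cases hk : k = 0
    · rw [if_pos hk]
      refine iff_of_true ?_ hk
      exact (Hadj₁ _ (mem₁ i).1 _ hv₁K (mem₁ i).2).2 (Or.inr (Or.inl rfl))
    · rw [if_neg hk]
      exact iff_of_false (Hnc _ (mem₁ i).1 _ hv₂K) hk
  have crv : ∀ (i : Fin m₂) (k : Fin 2), G.Adj (ψ₂ i) (if k = 0 then v₁ else v₂) ↔
      (FGraph m₁ 1 m₂).Adj (.inl (.inr i)) (.inr (.inr k)) := by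
    intro i k
    rw [Frv]
    by_cases hk : k = 0
    · rw [if_pos hk]
      refine iff_of_false (fun h => Hnc _ hv₁K _ (mem₂ i).1 h.symm) ?_
      intro h
      rw [hk] at h
      exact absurd h (by decide)
    · rw [if_neg hk]
      refine iff_of_true ?_ (by omega)
      exact (Hadj₂ _ (mem₂ i).1 _ hv₂K (mem₂ i).2).2 (Or.inr (Or.inl rfl))
  have cbb : ∀ b b' : Fin 1, G.Adj x x ↔
      (FGraph m₁ 1 m₂).Adj (.inr (.inl b)) (.inr (.inl b')) :=
    fun b b' => iff_of_false (G.irrefl) (Fbb b b')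
  have cbv : ∀ (b : Fin 1) (k : Fin 2), G.Adj x (if k = 0 then v₁ else v₂) ↔
      (FGraph m₁ 1 m₂).Adj (.inr (.inl b)) (.inr (.inr k)) := by
    intro b k
    refine iff_of_true ?_ (Fbv b k)
    by_cases hk : k = 0
    · rw [if_pos hk]; exact (Hadjx v₁).2 (Or.inl rfl)
    · rw [if_neg hk]; exact (Hadjx v₂).2 (Or.inr rfl)
  have cvv : ∀ k k' : Fin 2,
      G.Adj (if k = 0 then v₁ else v₂) (if k' = 0 then v₁ else v₂) ↔
      (FGraph m₁ 1 m₂).Adj (.inr (.inr k)) (.inr (.inr k')) := by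
    intro k k'
    refine iff_of_false ?_ (Fvv k k')
    by_cases hk : k = 0 <;> by_cases hk' : k' = 0
    · rw [if_pos hk, if_pos hk']; exact G.irrefl
    · rw [if_pos hk, if_neg hk']; exact Hnc _ hv₁K _ hv₂K
    · rw [if_neg hk, if_pos hk']; exact fun h => Hnc _ hv₁K _ hv₂K h.symm
    · rw [if_neg hk, if_neg hk']; exact G.irrefl
  refine ⟨SimpleGraph.Iso.symm ⟨Equiv.ofBijective _ hbij, ?_⟩⟩
  intro a b
  show G.Adj (gfun x v₁ v₂ ψ₁ ψ₂ a) (gfun x v₁ v₂ ψ₁ ψ₂ b) ↔ (FGraph m₁ 1 m₂).Adj a b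
  rcases a with (i | i) | (b₀ | k) <;> rcases b with (j | j) | (b₁ | k') <;>
    simp only [gfun]
  · exact cll i j
  · exact clr i j
  · exact clb i b₁
  · exact clv i k'
  · rw [G.adj_comm, (FGraph m₁ 1 m₂).adj_comm]
    exact clr j i
  · exact crr i j
  · exact crb i b₁
  · exact crv i k'
  · rw [G.adj_comm, (FGraph m₁ 1 m₂).adj_comm]
    exact clb j b₀
  · rw [G.adj_comm, (FGraph m₁ 1 m₂).adj_comm]
    exact crb j b₀
  · exact cbb b₀ b₁
  · exact cbv b₀ k'
  · rw [G.adj_comm, (FGraph m₁ 1 m₂).adj_comm]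
    exact clv j k
  · rw [G.adj_comm, (FGraph m₁ 1 m₂).adj_comm]
    exact crv j k
  · rw [G.adj_comm, (FGraph m₁ 1 m₂).adj_comm]
    exact cbv b₁ k
  · exact cvv k k'

end MB7

open MB7 in
theorem stmt7 {V : Type*} [Fintype V] (G : SimpleGraph V) (hconn : G.Connected)
    (hcrit : Critical2 G) (x : V)
    (hcut : ¬ (G.induce ({x}ᶜ : Set V)).Connected)
    (hbridge : ∀ y : V, G.Adj x y → G.IsBridge s(x, y)) :
    ∃ m₁ m₂ : ℕ, 2 ≤ m₁ ∧ m₁ ≤ m₂ ∧ Nonempty (G ≃g FGraph m₁ 1 m₂) := by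
  classical
  obtain ⟨⟨hW2, -⟩, hdel⟩ := hcrit
  -- a vertex different from x
  obtain ⟨dx, hdxne, hdxbr⟩ := hW2 x
  have hnecompl : Nonempty ({x}ᶜ : Set V) := ⟨⟨dx, by simpa using hdxne⟩⟩
  rw [SimpleGraph.connected_iff] at hcut
  push_neg at hcut
  have hnpc : ¬ (G.induce ({x}ᶜ : Set V)).Preconnected := fun h => (hcut h).false hnecompl.some
  obtain ⟨A, hA⟩ := not_forall.1 hnpc
  obtain ⟨B, hAB⟩ := not_forall.1 hA
  have hnra : ¬ RA G x (A : V) (B : V) := by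
    rintro ⟨wk, hwk⟩
    exact hAB (ra_induce wk hwk A.prop B.prop)
  have hax : (A : V) ≠ x := A.prop
  have hbx : (B : V) ≠ x := B.prop
  obtain ⟨wA⟩ := hconn.preconnected (A : V) x
  obtain ⟨wB⟩ := hconn.preconnected (B : V) x
  obtain ⟨v₁, hv₁adj, hrav₁⟩ := reach_nbr wA hax
  obtain ⟨v₂, hv₂adj, hrav₂⟩ := reach_nbr wB hbx
  have hv₁x : v₁ ≠ x := hv₁adj.ne.symm
  have hv₂x : v₂ ≠ x := hv₂adj.ne.symm
  have hnra12 : ¬ RA G x v₁ v₂ := fun h => hnra (hrav₁.trans (h.trans hrav₂.symm))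
  have hv₁₂ : v₁ ≠ v₂ := by
    intro h
    exact hnra12 (by rw [h]; exact ra_refl hv₂x)
  have hns : ∀ a b : V, G.Adj x a → G.Adj x b → a ≠ b → ¬ RA G x a b :=
    fun a b ha hb hne h => bridge_sep hbridge hb ha (fun hh => hne hh.symm) h
  -- classify the neighbours of x
  rcases hdxbr with hdom1 | hstrat
  · exfalso
    have huniv : ∀ w, w ≠ dx → G.Adj dx w := by
      intro w hw
      obtain ⟨e, he, hadj⟩ := hdom1 w (by simpa using hw)
      simp only [Set.mem_singleton_iff] at he
      rw [← he]; exact hadj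
    exact hnra12 (univ_ra huniv hdxne hv₁x hv₂x)
  have hnbrs : ∀ u, G.Adj x u → u = v₁ ∨ u = v₂ := by
    intro u hu0
    by_contra hcon
    push_neg at hcon
    obtain ⟨huv₁, huv₂⟩ := hcon
    have hux : u ≠ x := hu0.ne.symm
    -- get a dominating pair avoiding x
    have hpair : ∃ d₂, d₂ ≠ x ∧ Dominating G {dx, d₂} := by
      by_cases hdxv : dx = v₁
      · obtain ⟨d₂, hd₂mem, hdom⟩ := hstrat v₂ (by
          simp only [Set.mem_insert_iff, Set.mem_singleton_iff, not_or]
          exact ⟨hv₂x, fun h => hv₁₂ ((hdxv ▸ h).symm)⟩)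
        simp only [Set.mem_insert_iff, Set.mem_singleton_iff, not_or] at hd₂mem
        exact ⟨d₂, hd₂mem.1, hdom⟩
      · obtain ⟨d₂, hd₂mem, hdom⟩ := hstrat v₁ (by
          simp only [Set.mem_insert_iff, Set.mem_singleton_iff, not_or]
          exact ⟨hv₁x, fun h => hdxv h.symm⟩)
        simp only [Set.mem_insert_iff, Set.mem_singleton_iff, not_or] at hd₂mem
        exact ⟨d₂, hd₂mem.1, hdom⟩
    obtain ⟨d₂, hd₂x, hdom⟩ := hpair
    have hdom3 : ∀ y : V, y ≠ x → RA G x y dx ∨ RA G x y d₂ := by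
      intro y hy
      by_cases h1 : y = dx
      · exact Or.inl (by rw [h1]; exact ra_refl hdxne)
      by_cases h2 : y = d₂
      · exact Or.inr (by rw [h2]; exact ra_refl hd₂x)
      obtain ⟨dd, hdd, hadj⟩ := hdom y (by
        simp only [Set.mem_insert_iff, Set.mem_singleton_iff, not_or]
        exact ⟨h1, h2⟩)
      simp only [Set.mem_insert_iff, Set.mem_singleton_iff] at hdd
      rcases hdd with h | h
      · exact Or.inl (by rw [← h]; exact ra_adj hadj.symm hy (h ▸ hdxne))
      · exact Or.inr (by rw [← h]; exact ra_adj hadj.symm hy (h ▸ hd₂x))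
    have h1 := hdom3 v₁ hv₁x
    have h2 := hdom3 v₂ hv₂x
    have h3 := hdom3 u hux
    have hn1u : ¬ RA G x v₁ u := hns v₁ u hv₁adj hu0 (fun h => huv₁ h.symm)
    have hn2u : ¬ RA G x v₂ u := hns v₂ u hv₂adj hu0 (fun h => huv₂ h.symm)
    rcases h1 with h1 | h1 <;> rcases h2 with h2 | h2 <;> rcases h3 with h3 | h3
    · exact hnra12 (h1.trans h2.symm)
    · exact hnra12 (h1.trans h2.symm)
    · exact hn1u (h1.trans h3.symm)
    · exact hn2u (h2.trans h3.symm)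
    · exact hn2u (h2.trans h3.symm)
    · exact hn1u (h1.trans h3.symm)
    · exact hnra12 (h1.trans h2.symm)
    · exact hnra12 (h1.trans h2.symm)
  -- the two components
  set C₁ : Set V := {y | RA G x y v₁} with hC₁def
  set C₂ : Set V := {y | RA G x y v₂} with hC₂def
  have hC₁mem : ∀ y, y ∈ C₁ ↔ RA G x y v₁ := fun y => Iff.rfl
  have hC₂mem : ∀ y, y ∈ C₂ ↔ RA G x y v₂ := fun y => Iff.rfl
  have hv₁C : v₁ ∈ C₁ := ra_refl hv₁x
  have hv₂C : v₂ ∈ C₂ := ra_refl hv₂x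
  have hx1 : x ∉ C₁ := fun h => (RA.ne_left h) rfl
  have hx2 : x ∉ C₂ := fun h => (RA.ne_left h) rfl
  have hdisj : ∀ y, y ∈ C₁ → y ∉ C₂ := by
    intro y h1 h2
    exact hnra12 ((RA.symm h1).trans h2)
  have hcov : ∀ y : V, y ≠ x → y ∈ C₁ ∨ y ∈ C₂ := by
    intro y hy
    obtain ⟨w⟩ := hconn.preconnected y x
    obtain ⟨u, hu, hra⟩ := reach_nbr w hy
    rcases hnbrs u hu with h | h
    · exact Or.inl (show RA G x y v₁ by rw [← h]; exact hra)
    · exact Or.inr (show RA G x y v₂ by rw [← h]; exact hra)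
  have hadjx : ∀ u, G.Adj x u ↔ u = v₁ ∨ u = v₂ := by
    intro u
    constructor
    · exact hnbrs u
    · rintro (rfl | rfl)
      · exact hv₁adj
      · exact hv₂adj
  have hnc : ∀ u ∈ C₁, ∀ w ∈ C₂, ¬ G.Adj u w := by
    intro u hu w hw hadj
    exact hnra12 (((RA.symm hu).trans (ra_adj hadj (RA.ne_left hu) (RA.ne_left hw))).trans hw)
  -- symmetric versions
  have hcov' : ∀ y : V, y ≠ x → y ∈ C₂ ∨ y ∈ C₁ := fun y hy => (hcov y hy).symm
  have hdisj' : ∀ y, y ∈ C₂ → y ∉ C₁ := fun y h2 h1 => hdisj y h1 h2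
  have hadjx' : ∀ u, G.Adj x u ↔ u = v₂ ∨ u = v₁ := fun u => (hadjx u).trans or_comm
  have hnc' : ∀ u ∈ C₂, ∀ w ∈ C₁, ¬ G.Adj u w := fun u hu w hw hadj => hnc w hw u hu hadj.symm
  -- both components have at least two vertices
  have hgap₂ : ∃ y ∈ C₂, y ≠ v₂ := big hcov hdisj hx1 hx2 hv₁C hv₂C hadjx hnc hW2 hdel
  have hgap₁ : ∃ y ∈ C₁, y ≠ v₁ := big hcov' hdisj' hx2 hx1 hv₂C hv₁C hadjx' hnc' hW2 hdel
  -- the game structure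
  obtain ⟨hv₂A, p₁, q₁, hp₁A, hq₁A, hpq₁, hp₁v, hq₁v⟩ :=
    game_side hcov hdisj hx1 hx2 hv₁C hv₂C hadjx hnc hgap₁ hgap₂ hW2
  obtain ⟨hv₁A, p₂, q₂, hp₂A, hq₂A, hpq₂, hp₂v, hq₂v⟩ :=
    game_side hcov' hdisj' hx2 hx1 hv₂C hv₁C hadjx' hnc' hgap₂ hgap₁ hW2
  -- independence structure from criticality
  have hind₁ := structure_side hcov hdisj hx1 hx2 hv₁C hv₂C hadjx hnc hdel
    hv₁A hv₂A p₁ q₁ hp₁A hq₁A hpq₁ hp₁v hq₁v p₂ q₂ hp₂A hq₂A hpq₂ hp₂v hq₂v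
  have hind₂ := structure_side hcov' hdisj' hx2 hx1 hv₂C hv₁C hadjx' hnc' hdel
    hv₂A hv₁A p₂ q₂ hp₂A hq₂A hpq₂ hp₂v hq₂v p₁ q₁ hp₁A hq₁A hpq₁ hp₁v hq₁v
  -- finsets
  set K₁ : Finset V := Finset.univ.filter (· ∈ C₁) with hK₁def
  set K₂ : Finset V := Finset.univ.filter (· ∈ C₂) with hK₂def
  have hK₁m : ∀ y, y ∈ K₁ ↔ y ∈ C₁ := by
    intro y; rw [hK₁def]; simp
  have hK₂m : ∀ y, y ∈ K₂ ↔ y ∈ C₂ := by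
    intro y; rw [hK₂def]; simp
  -- adjacency characterisations
  have Hadj₁ : ∀ u ∈ K₁, ∀ w ∈ K₁, u ≠ w →
      (G.Adj u w ↔ ((u = v₁ ∨ u = p₁ ∨ u = q₁) ∨ (w = v₁ ∨ w = p₁ ∨ w = q₁))) := by
    intro u hu w hw hne
    rw [hK₁m] at hu hw
    constructor
    · intro hadj
      by_contra hsp
      push_neg at hsp
      obtain ⟨⟨h1, h2, h3⟩, ⟨h4, h5, h6⟩⟩ := hsp
      exact hind₁ u hu h1 h2 h3 w hw h4 h5 h6 hadj
    · rintro ((rfl | rfl | rfl) | (rfl | rfl | rfl))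
      · exact hv₁A.2 w hw (fun h => hne h.symm)
      · exact hp₁A.2 w hw (fun h => hne h.symm)
      · exact hq₁A.2 w hw (fun h => hne h.symm)
      · exact (hv₁A.2 u hu hne).symm
      · exact (hp₁A.2 u hu hne).symm
      · exact (hq₁A.2 u hu hne).symm
  have Hadj₂ : ∀ u ∈ K₂, ∀ w ∈ K₂, u ≠ w →
      (G.Adj u w ↔ ((u = v₂ ∨ u = p₂ ∨ u = q₂) ∨ (w = v₂ ∨ w = p₂ ∨ w = q₂))) := by
    intro u hu w hw hne
    rw [hK₂m] at hu hw
    constructor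
    · intro hadj
      by_contra hsp
      push_neg at hsp
      obtain ⟨⟨h1, h2, h3⟩, ⟨h4, h5, h6⟩⟩ := hsp
      exact hind₂ u hu h1 h2 h3 w hw h4 h5 h6 hadj
    · rintro ((rfl | rfl | rfl) | (rfl | rfl | rfl))
      · exact hv₂A.2 w hw (fun h => hne h.symm)
      · exact hp₂A.2 w hw (fun h => hne h.symm)
      · exact hq₂A.2 w hw (fun h => hne h.symm)
      · exact (hv₂A.2 u hu hne).symm
      · exact (hp₂A.2 u hu hne).symm
      · exact (hq₂A.2 u hu hne).symm
  -- membership in the finsets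
  have hv₁K : v₁ ∈ K₁ := (hK₁m v₁).2 hv₁C
  have hp₁K : p₁ ∈ K₁ := (hK₁m p₁).2 hp₁A.1
  have hq₁K : q₁ ∈ K₁ := (hK₁m q₁).2 hq₁A.1
  have hv₂K : v₂ ∈ K₂ := (hK₂m v₂).2 hv₂C
  have hp₂K : p₂ ∈ K₂ := (hK₂m p₂).2 hp₂A.1
  have hq₂K : q₂ ∈ K₂ := (hK₂m q₂).2 hq₂A.1
  have Hx1 : x ∉ K₁ := fun h => hx1 ((hK₁m x).1 h)
  have Hx2 : x ∉ K₂ := fun h => hx2 ((hK₂m x).1 h)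
  have HdisjK : ∀ y, y ∈ K₁ → y ∉ K₂ :=
    fun y h1 h2 => hdisj y ((hK₁m y).1 h1) ((hK₂m y).1 h2)
  have HdisjK' : ∀ y, y ∈ K₂ → y ∉ K₁ := fun y h2 h1 => HdisjK y h1 h2
  have HcovK : ∀ y : V, y ≠ x → y ∈ K₁ ∨ y ∈ K₂ := by
    intro y hy
    rcases hcov y hy with h | h
    · exact Or.inl ((hK₁m y).2 h)
    · exact Or.inr ((hK₂m y).2 h)
  have HcovK' : ∀ y : V, y ≠ x → y ∈ K₂ ∨ y ∈ K₁ := fun y hy => (HcovK y hy).symm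
  have HncK : ∀ u ∈ K₁, ∀ w ∈ K₂, ¬ G.Adj u w :=
    fun u hu w hw => hnc u ((hK₁m u).1 hu) w ((hK₂m w).1 hw)
  have HncK' : ∀ u ∈ K₂, ∀ w ∈ K₁, ¬ G.Adj u w :=
    fun u hu w hw h => HncK w hw u hu h.symm
  -- cardinalities
  have h3₁ : 3 ≤ K₁.card := by
    have hsub : ({v₁, p₁, q₁} : Finset V) ⊆ K₁ := by
      intro a ha
      simp only [Finset.mem_insert, Finset.mem_singleton] at ha
      rcases ha with rfl | rfl | rfl <;> assumption
    have hcard : ({v₁, p₁, q₁} : Finset V).card = 3 := by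
      rw [Finset.card_insert_of_notMem, Finset.card_insert_of_notMem,
        Finset.card_singleton]
      · simp only [Finset.mem_singleton]; exact hpq₁
      · simp only [Finset.mem_insert, Finset.mem_singleton]
        push_neg
        exact ⟨fun h => hp₁v h.symm, fun h => hq₁v h.symm⟩
    have := Finset.card_le_card hsub
    omega
  have h3₂ : 3 ≤ K₂.card := by
    have hsub : ({v₂, p₂, q₂} : Finset V) ⊆ K₂ := by
      intro a ha
      simp only [Finset.mem_insert, Finset.mem_singleton] at ha
      rcases ha with rfl | rfl | rfl <;> assumption
    have hcard : ({v₂, p₂, q₂} : Finset V).card = 3 := by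
      rw [Finset.card_insert_of_notMem, Finset.card_insert_of_notMem,
        Finset.card_singleton]
      · simp only [Finset.mem_singleton]; exact hpq₂
      · simp only [Finset.mem_insert, Finset.mem_singleton]
        push_neg
        exact ⟨fun h => hp₂v h.symm, fun h => hq₂v h.symm⟩
    have := Finset.card_le_card hsub
    omega
  rcases le_total K₁.card K₂.card with hle | hle
  · refine ⟨K₁.card - 1, K₂.card - 1, by omega, by omega, ?_⟩
    exact buildIso G x v₁ v₂ p₁ q₁ p₂ q₂ K₁ K₂ (K₁.card - 1) (K₂.card - 1)
      (by omega) (by omega) Hx1 Hx2 HdisjK HcovK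
      hv₁K hp₁K hq₁K hp₁v hq₁v hpq₁ hv₂K hp₂K hq₂K hp₂v hq₂v hpq₂
      hadjx HncK Hadj₁ Hadj₂
  · refine ⟨K₂.card - 1, K₁.card - 1, by omega, by omega, ?_⟩
    exact buildIso G x v₂ v₁ p₂ q₂ p₁ q₁ K₂ K₁ (K₂.card - 1) (K₁.card - 1)
      (by omega) (by omega) Hx2 Hx1 HdisjK' HcovK'
      hv₂K hp₂K hq₂K hp₂v hq₂v hpq₂ hv₁K hp₁K hq₁K hp₁v hq₁v hpq₁
      hadjx' HncK' Hadj₂ Hadj₁
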